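/- arXiv:2104.01749 — 3 statements merged into one kernel-verified Lean document; each statement's English description precedes it below -/
import Mathlib

section
/- The maximum of det B(A₄, x, y, 1) over all vectors x, y ∈ {0, 1}⁴, where A₄ is the upper-left 4 × 4 submatrix of A₁₅, equals 5, and this maximum is attained by the bordering that yields A₅ (the upper-left 5 × 5 submatrix of A₁₅). -/
open Matrix

/-- The bordered matrix `B(A, x, y, z)`: upper-left `n × n` block `A`, first `n` entries of the
last column given by `y`, first `n` entries of the last row given by `x`, corner entry `z`. -/
def border {n : ℕ} (A : Matrix (Fin n) (Fin n) ℤ) (x y : Fin n → ℤ) (z : ℤ) :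
    Matrix (Fin (n + 1)) (Fin (n + 1)) ℤ :=
  Matrix.of fun i j =>
    if hi : (i : ℕ) < n then
      if hj : (j : ℕ) < n then A ⟨i, hi⟩ ⟨j, hj⟩ else y ⟨i, hi⟩
    else
      if hj : (j : ℕ) < n then x ⟨j, hj⟩ else z

/-- The matrix `A₁₅` from the paper. -/
def A15 : Matrix (Fin 15) (Fin 15) ℤ :=
  !![1, 0, 1, 1, 0, 0, 0, 0, 0, 0, 1, 0, 0, 1, 1;
      1, 1, 0, 0, 0, 1, 0, 1, 1, 1, 1, 0, 0, 0, 0;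
      0, 1, 1, 0, 1, 0, 0, 1, 0, 0, 1, 1, 0, 1, 0;
      0, 1, 0, 1, 1, 1, 0, 0, 0, 0, 0, 0, 1, 0, 1;
      1, 0, 0, 0, 1, 1, 1, 1, 0, 0, 0, 0, 0, 1, 0;
      0, 0, 1, 0, 0, 1, 1, 0, 1, 0, 0, 0, 1, 1, 0;
      0, 1, 0, 1, 0, 0, 1, 1, 0, 0, 1, 0, 1, 1, 0;
      0, 0, 1, 1, 0, 1, 0, 1, 0, 1, 0, 1, 1, 0, 0;
      0, 0, 0, 1, 1, 0, 0, 1, 1, 1, 0, 0, 0, 1, 1;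
      1, 1, 1, 0, 1, 0, 1, 0, 0, 1, 0, 0, 1, 0, 0;
      0, 0, 0, 0, 1, 1, 1, 0, 0, 1, 1, 1, 0, 0, 1;
      1, 1, 0, 1, 0, 0, 1, 0, 1, 0, 0, 1, 0, 0, 0;
      1, 0, 0, 0, 1, 0, 0, 1, 1, 0, 1, 1, 1, 0, 1;
      1, 1, 0, 0, 0, 1, 0, 0, 0, 1, 0, 1, 1, 1, 1;
      0, 1, 1, 0, 0, 0, 1, 1, 0, 0, 0, 0, 0, 0, 1]

/-- `Asub k h` is the upper-left `k × k` submatrix `A_k` of `A₁₅`. -/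
def Asub (k : ℕ) (h : k ≤ 15) : Matrix (Fin k) (Fin k) ℤ :=
  A15.submatrix (Fin.castLE h) (Fin.castLE h)

lemma border_eq (x y : Fin 4 → ℤ) :
    border (Asub 4 (by norm_num)) x y 1 =
      !![1, 0, 1, 1, y 0;
         1, 1, 0, 0, y 1;
         0, 1, 1, 0, y 2;
         0, 1, 0, 1, y 3;
         x 0, x 1, x 2, x 3, 1] := by
  ext i j
  fin_cases i <;> fin_cases j <;> rfl

set_option maxHeartbeats 1000000 in
lemma det_border (x y : Fin 4 → ℤ) :
    (border (Asub 4 (by norm_num)) x y 1).det =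
      3 - x 0 * y 0 - 2 * x 0 * y 1 + x 0 * y 2 + x 0 * y 3
        + x 1 * y 0 - x 1 * y 1 - x 1 * y 2 - x 1 * y 3
        - x 2 * y 0 + x 2 * y 1 - 2 * x 2 * y 2 + x 2 * y 3
        - x 3 * y 0 + x 3 * y 1 + x 3 * y 2 - 2 * x 3 * y 3 := by
  rw [border_eq]
  simp [Matrix.det_succ_row_zero, Fin.sum_univ_succ, Fin.succAbove]
  ring

lemma Asub5_eq : Asub 5 (by norm_num) =
    !![1, 0, 1, 1, 0;
       1, 1, 0, 0, 0;
       0, 1, 1, 0, 1;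
       0, 1, 0, 1, 1;
       1, 0, 0, 0, 1] := by
  ext i j
  fin_cases i <;> fin_cases j <;> rfl

/-- The maximum of `det B(A_4, x, y, 1)` over `x, y ∈ {0, 1}^4` equals `5`, and it is
attained by the bordering of `A_4` that yields `A_5`. -/
theorem border_max_4 :
    IsGreatest {d : ℤ | ∃ x y : Fin 4 → ℤ,
        (∀ i, x i = 0 ∨ x i = 1) ∧ (∀ i, y i = 0 ∨ y i = 1) ∧
        d = (border (Asub 4 (by norm_num)) x y 1).det} 5 ∧
    border (Asub 4 (by norm_num))
        (fun j => A15 ⟨4, by norm_num⟩ (Fin.castLE (by norm_num) j))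
        (fun i => A15 (Fin.castLE (by norm_num) i) ⟨4, by norm_num⟩) 1
      = Asub 5 (by norm_num) ∧
    (Asub 5 (by norm_num)).det = 5 := by
  refine ⟨⟨⟨![1,0,0,0], ![0,0,1,1], ?_, ?_, ?_⟩, ?_⟩, ?_, ?_⟩
  · intro i; fin_cases i <;> simp
  · intro i; fin_cases i <;> simp
  · rw [det_border]; decide
  · rintro d ⟨x, y, hx, hy, rfl⟩
    rw [det_border]
    rcases hx 0 with a0 | a0 <;> rcases hx 1 with a1 | a1 <;>
      rcases hx 2 with a2 | a2 <;> rcases hx 3 with a3 | a3 <;>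
      rcases hy 0 with b0 | b0 <;> rcases hy 1 with b1 | b1 <;>
      rcases hy 2 with b2 | b2 <;> rcases hy 3 with b3 | b3 <;>
      rw [a0, a1, a2, a3, b0, b1, b2, b3] <;> norm_num
  · ext i j
    fin_cases i <;> fin_cases j <;> rfl
  · have h5 : Asub 5 (by norm_num) =
        border (Asub 4 (by norm_num)) ![1,0,0,0] ![0,0,1,1] 1 := by
      ext i j
      fin_cases i <;> fin_cases j <;> rfl
    rw [h5, det_border]
    decide
end

section
/- The maximum of det B(A₁₁, x, y, 1) over all vectors x, y ∈ {0, 1}¹¹, where A₁₁ is the upper-left 11 × 11 submatrix of A₁₅, equals 1608, and this maximum is attained by the bordering that yields A₁₂ (the upper-left 12 × 12 submatrix of A₁₅). -/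
open Matrix

set_option maxRecDepth 2000

theorem det_border_eq {n : ℕ} (A M : Matrix (Fin n) (Fin n) ℤ) (d : ℤ)
    (hM : M * A = d • (1 : Matrix (Fin n) (Fin n) ℤ))
    (x y : Fin n → ℤ) (z : ℤ) :
    d * (border A x y z).det = A.det * (d * z - ∑ i, ∑ j, x i * M i j * y j) := by
  set B1 : Matrix (Fin n) (Fin 1) ℤ := Matrix.of fun i _ => y i with hB1
  set C1 : Matrix (Fin 1) (Fin n) ℤ := Matrix.of fun _ j => x j with hC1
  set D1 : Matrix (Fin 1) (Fin 1) ℤ := Matrix.of fun _ _ => z with hD1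
  have hsymm : ∀ i : Fin (n + 1),
      finSumFinEquiv.symm i = if hi : (i : ℕ) < n then Sum.inl ⟨i, hi⟩ else Sum.inr 0 := by
    intro i
    split
    · rename_i hi
      rw [Equiv.symm_apply_eq]
      apply Fin.ext
      simp [finSumFinEquiv]
    · rename_i hi
      rw [Equiv.symm_apply_eq]
      apply Fin.ext
      have : (i : ℕ) = n := le_antisymm (Nat.lt_succ_iff.mp i.isLt) (le_of_not_gt hi)
      simp [finSumFinEquiv, this]
  have hb : border A x y z
      = (fromBlocks A B1 C1 D1).submatrix finSumFinEquiv.symm finSumFinEquiv.symm := by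
    ext i j
    simp only [submatrix_apply, hsymm, border, Matrix.of_apply]
    by_cases hi : (i : ℕ) < n <;> by_cases hj : (j : ℕ) < n <;>
      simp [hi, hj, fromBlocks, hB1, hC1, hD1]
  have hmul : (fromBlocks (1 : Matrix (Fin n) (Fin n) ℤ) 0 (-(C1 * M))
        (d • (1 : Matrix (Fin 1) (Fin 1) ℤ))) * fromBlocks A B1 C1 D1
      = fromBlocks A B1 0 (-(C1 * M * B1) + d • D1) := by
    have e1 : (1 : Matrix (Fin n) (Fin n) ℤ) * A + (0 : Matrix (Fin n) (Fin 1) ℤ) * C1 = A := by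
      simp
    have e2 : (1 : Matrix (Fin n) (Fin n) ℤ) * B1 + (0 : Matrix (Fin n) (Fin 1) ℤ) * D1 = B1 := by
      simp
    have e3 : (-(C1 * M)) * A + (d • (1 : Matrix (Fin 1) (Fin 1) ℤ)) * C1 = 0 := by
      rw [Matrix.neg_mul, Matrix.mul_assoc, hM, Matrix.mul_smul, Matrix.mul_one,
        Matrix.smul_mul, Matrix.one_mul, neg_add_cancel]
    have e4 : (-(C1 * M)) * B1 + (d • (1 : Matrix (Fin 1) (Fin 1) ℤ)) * D1
        = -(C1 * M * B1) + d • D1 := by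
      rw [Matrix.neg_mul, Matrix.smul_mul, Matrix.one_mul]
    rw [fromBlocks_multiply, e1, e2, e3, e4]
  have hdet := congrArg Matrix.det hmul
  rw [det_mul, det_fromBlocks_zero₁₂, det_fromBlocks_zero₂₁] at hdet
  rw [hb, det_submatrix_equiv_self]
  rw [det_one, one_mul] at hdet
  have h1 : ((d • (1 : Matrix (Fin 1) (Fin 1) ℤ)).det) = d := by
    rw [det_fin_one, Matrix.smul_apply, Matrix.one_apply_eq, smul_eq_mul, mul_one]
  have h2 : (-(C1 * M * B1) + d • D1).det = d * z - ∑ i, ∑ j, x i * M i j * y j := by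
    rw [det_fin_one]
    simp only [Matrix.add_apply, Matrix.neg_apply, Matrix.smul_apply, hD1, Matrix.of_apply,
      smul_eq_mul, Matrix.mul_apply, hB1, hC1]
    simp_rw [Finset.sum_mul]
    rw [Finset.sum_comm]
    ring
  rw [h1, h2] at hdet
  linarith [hdet]

theorem det_step {n : ℕ} (A M : Matrix (Fin n) (Fin n) ℤ) (d s : ℤ) (hd : d ≠ 0)
    (hM : M * A = d • (1 : Matrix (Fin n) (Fin n) ℤ)) (hdet : A.det = d) (x y : Fin n → ℤ)
    (hs : ∑ i, ∑ j, x i * M i j * y j = s) :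
    (border A x y 1).det = d - s := by
  have h := det_border_eq A M d hM x y 1
  rw [hdet, hs, mul_one] at h
  exact mul_left_cancel₀ hd h

theorem hdet1 : (Asub 1 (by norm_num)).det = (1 : ℤ) := by decide
def M1 : Matrix (Fin 1) (Fin 1) ℤ := !![1]
def xv1 : Fin 1 → ℤ := ![1]
def yv1 : Fin 1 → ℤ := ![0]
def M2 : Matrix (Fin 2) (Fin 2) ℤ := !![1, 0; -1, 1]
def xv2 : Fin 2 → ℤ := ![0, 1]
def yv2 : Fin 2 → ℤ := ![1, 0]
def M3 : Matrix (Fin 3) (Fin 3) ℤ := !![1, 1, -1; -1, 1, 1; 1, -1, 1]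
def xv3 : Fin 3 → ℤ := ![0, 1, 0]
def yv3 : Fin 3 → ℤ := ![1, 0, 0]
def M4 : Matrix (Fin 4) (Fin 4) ℤ := !![1, 2, -1, -1; -1, 1, 1, 1; 1, -1, 2, -1; 1, -1, -1, 2]
def xv4 : Fin 4 → ℤ := ![1, 0, 0, 0]
def yv4 : Fin 4 → ℤ := ![0, 0, 1, 1]
def M5 : Matrix (Fin 5) (Fin 5) ℤ := !![1, 2, -1, -1, 2; -1, 3, 1, 1, -2; 2, -1, 3, -2, -1; 2, -1, -2, 3, -1; -1, -2, 1, 1, 3]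
def xv5 : Fin 5 → ℤ := ![0, 0, 1, 0, 0]
def yv5 : Fin 5 → ℤ := ![0, 1, 0, 1, 1]
def M6 : Matrix (Fin 6) (Fin 6) ℤ := !![3, 3, 0, -3, 3, -3; -1, 5, 3, 1, -4, -2; 2, -1, 3, -2, -1, 4; 4, -2, -3, 5, -2, -1; -1, -4, 3, 1, 5, -2; -2, 1, -3, 2, 1, 5]
def xv6 : Fin 6 → ℤ := ![0, 1, 0, 1, 0, 0]
def yv6 : Fin 6 → ℤ := ![0, 0, 0, 0, 1, 1]
def M7 : Matrix (Fin 7) (Fin 7) ℤ := !![6, 6, 0, -6, 6, -6, 0; -4, 8, 6, -2, -4, -2, 6; 5, -1, 6, -2, -4, 7, -3; 7, -5, -6, 8, -2, -1, 3; -1, -7, 6, 4, 8, -5, -3; -2, 4, -6, 8, -2, 8, -6; -3, -3, 0, -6, 6, 3, 9]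
def xv7 : Fin 7 → ℤ := ![0, 0, 1, 1, 0, 1, 0]
def yv7 : Fin 7 → ℤ := ![0, 1, 1, 0, 1, 0, 1]
def M8 : Matrix (Fin 8) (Fin 8) ℤ := !![20, 12, -4, -4, 8, -4, -4, -12; 0, 16, 8, 8, -16, 8, 8, -16; 10, -2, 14, -6, -8, 14, -6, 2; 10, -10, -10, 10, 0, -10, 10, 10; 0, -16, 12, 12, 16, -8, -8, -4; -10, 10, -10, 10, 0, 10, -10, 10; 0, -8, -4, -4, 8, 16, 16, -12; -10, 2, 6, -14, 8, -14, 6, 18]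
def xv8 : Fin 8 → ℤ := ![0, 0, 0, 1, 1, 0, 0, 1]
def yv8 : Fin 8 → ℤ := ![0, 1, 0, 0, 0, 1, 0, 0]
def M9 : Matrix (Fin 9) (Fin 9) ℤ := !![48, 24, -8, -8, 24, -16, -8, -24, -8; 0, 24, 24, 24, -24, 0, 24, -24, -24; 24, -12, 36, -12, -12, 24, -12, 12, -12; 24, -12, -28, 20, -12, -8, 20, 12, 20; 0, -24, 24, 24, 24, 0, -24, -24, 24; -24, 12, -20, 28, 12, 8, -20, 36, -20; 0, -24, -8, -8, 24, 32, 40, -24, -8; -24, 12, 12, -36, 12, -24, 12, 36, 12; 0, 24, -8, -8, -24, 32, -8, -24, 40]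
def xv9 : Fin 9 → ℤ := ![1, 1, 1, 0, 1, 0, 1, 0, 0]
def yv9 : Fin 9 → ℤ := ![0, 1, 0, 0, 0, 0, 0, 1, 1]
def M10 : Matrix (Fin 10) (Fin 10) ℤ := !![104, 56, -24, -20, 52, -40, -20, -48, -16, 8; -18, 58, 38, 50, -64, -10, 50, -34, -48, 24; 46, -26, 74, -30, -32, 50, -30, 38, -24, 12; 70, -30, -50, 50, -20, -10, 50, 10, 40, -20; -18, -52, 38, 50, 46, -10, -60, -34, 62, 24; -34, 24, -26, 70, 38, 30, -40, 58, -54, -28; -42, -48, -58, -30, 34, 50, 80, -6, -2, 56; -10, 20, 70, -70, 50, -30, 40, 30, 10, -60; 30, 50, 10, -10, -40, 90, -10, -90, 80, -40; -72, 12, -68, -20, -36, -40, -20, 84, 28, 96]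
def xv10 : Fin 10 → ℤ := ![0, 0, 0, 0, 1, 1, 1, 0, 0, 1]
def yv10 : Fin 10 → ℤ := ![1, 1, 1, 0, 0, 0, 1, 0, 0, 0]
def M11 : Matrix (Fin 11) (Fin 11) ℤ := !![198, 120, -126, -18, 186, -94, -76, -78, -26, 100, -116; -146, 122, 38, 178, -128, -10, 114, -34, -112, 152, -128; 78, -90, 170, -62, -64, 146, -94, 134, -56, 76, -64; 162, -94, -158, 150, -40, -22, 130, 46, 116, -28, -40; 20, -116, 152, 108, 92, -40, -148, -136, 156, 4, 92; -36, 88, -32, 168, 76, 72, -96, 124, -160, -128, 76; -64, -112, -124, -104, 68, 128, 232, -48, -16, 108, 68; -118, 20, 130, -154, 182, -66, 88, 138, 46, -84, -120; 22, 114, -14, -2, -80, 258, -42, -210, 232, -56, -80; -86, 76, -110, -102, -154, -130, -28, 162, 54, 164, 148; 166, 64, 114, -70, -82, -30, 40, -102, -34, -148, 220]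
def xv11 : Fin 11 → ℤ := ![1, 1, 0, 1, 0, 0, 1, 0, 1, 0, 0]
def yv11 : Fin 11 → ℤ := ![0, 0, 1, 0, 0, 0, 0, 1, 0, 0, 1]

theorem hM1 : M1 * Asub 1 (by norm_num) = (1 : ℤ) • 1 := by decide
theorem hstep1 : Asub 2 (by norm_num) = border (Asub 1 (by norm_num)) xv1 yv1 1 := by decide
theorem hs1 : ∑ i, ∑ j, xv1 i * M1 i j * yv1 j = (0 : ℤ) := by decide
theorem hdet2 : (Asub 2 (by norm_num)).det = (1 : ℤ) := by
  rw [hstep1]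
  rw [det_step (Asub 1 (by norm_num)) M1 _ _ (by norm_num) hM1 hdet1 xv1 yv1 hs1]
  norm_num

theorem hM2 : M2 * Asub 2 (by norm_num) = (1 : ℤ) • 1 := by decide
theorem hstep2 : Asub 3 (by norm_num) = border (Asub 2 (by norm_num)) xv2 yv2 1 := by decide
theorem hs2 : ∑ i, ∑ j, xv2 i * M2 i j * yv2 j = (-1 : ℤ) := by decide
theorem hdet3 : (Asub 3 (by norm_num)).det = (2 : ℤ) := by
  rw [hstep2]
  rw [det_step (Asub 2 (by norm_num)) M2 _ _ (by norm_num) hM2 hdet2 xv2 yv2 hs2]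
  norm_num

theorem hM3 : M3 * Asub 3 (by norm_num) = (2 : ℤ) • 1 := by decide
theorem hstep3 : Asub 4 (by norm_num) = border (Asub 3 (by norm_num)) xv3 yv3 1 := by decide
theorem hs3 : ∑ i, ∑ j, xv3 i * M3 i j * yv3 j = (-1 : ℤ) := by decide
theorem hdet4 : (Asub 4 (by norm_num)).det = (3 : ℤ) := by
  rw [hstep3]
  rw [det_step (Asub 3 (by norm_num)) M3 _ _ (by norm_num) hM3 hdet3 xv3 yv3 hs3]
  norm_num

theorem hM4 : M4 * Asub 4 (by norm_num) = (3 : ℤ) • 1 := by decide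
theorem hstep4 : Asub 5 (by norm_num) = border (Asub 4 (by norm_num)) xv4 yv4 1 := by decide
theorem hs4 : ∑ i, ∑ j, xv4 i * M4 i j * yv4 j = (-2 : ℤ) := by decide
theorem hdet5 : (Asub 5 (by norm_num)).det = (5 : ℤ) := by
  rw [hstep4]
  rw [det_step (Asub 4 (by norm_num)) M4 _ _ (by norm_num) hM4 hdet4 xv4 yv4 hs4]
  norm_num

theorem hM5 : M5 * Asub 5 (by norm_num) = (5 : ℤ) • 1 := by decide
theorem hstep5 : Asub 6 (by norm_num) = border (Asub 5 (by norm_num)) xv5 yv5 1 := by decide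
theorem hs5 : ∑ i, ∑ j, xv5 i * M5 i j * yv5 j = (-4 : ℤ) := by decide
theorem hdet6 : (Asub 6 (by norm_num)).det = (9 : ℤ) := by
  rw [hstep5]
  rw [det_step (Asub 5 (by norm_num)) M5 _ _ (by norm_num) hM5 hdet5 xv5 yv5 hs5]
  norm_num

theorem hM6 : M6 * Asub 6 (by norm_num) = (9 : ℤ) • 1 := by decide
theorem hstep6 : Asub 7 (by norm_num) = border (Asub 6 (by norm_num)) xv6 yv6 1 := by decide
theorem hs6 : ∑ i, ∑ j, xv6 i * M6 i j * yv6 j = (-9 : ℤ) := by decide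
theorem hdet7 : (Asub 7 (by norm_num)).det = (18 : ℤ) := by
  rw [hstep6]
  rw [det_step (Asub 6 (by norm_num)) M6 _ _ (by norm_num) hM6 hdet6 xv6 yv6 hs6]
  norm_num

theorem hM7 : M7 * Asub 7 (by norm_num) = (18 : ℤ) • 1 := by decide
theorem hstep7 : Asub 8 (by norm_num) = border (Asub 7 (by norm_num)) xv7 yv7 1 := by decide
theorem hs7 : ∑ i, ∑ j, xv7 i * M7 i j * yv7 j = (-22 : ℤ) := by decide
theorem hdet8 : (Asub 8 (by norm_num)).det = (40 : ℤ) := by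
  rw [hstep7]
  rw [det_step (Asub 7 (by norm_num)) M7 _ _ (by norm_num) hM7 hdet7 xv7 yv7 hs7]
  norm_num

theorem hM8 : M8 * Asub 8 (by norm_num) = (40 : ℤ) • 1 := by decide
theorem hstep8 : Asub 9 (by norm_num) = border (Asub 8 (by norm_num)) xv8 yv8 1 := by decide
theorem hs8 : ∑ i, ∑ j, xv8 i * M8 i j * yv8 j = (-56 : ℤ) := by decide
theorem hdet9 : (Asub 9 (by norm_num)).det = (96 : ℤ) := by
  rw [hstep8]
  rw [det_step (Asub 8 (by norm_num)) M8 _ _ (by norm_num) hM8 hdet8 xv8 yv8 hs8]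
  norm_num

theorem hM9 : M9 * Asub 9 (by norm_num) = (96 : ℤ) • 1 := by decide
theorem hstep9 : Asub 10 (by norm_num) = border (Asub 9 (by norm_num)) xv9 yv9 1 := by decide
theorem hs9 : ∑ i, ∑ j, xv9 i * M9 i j * yv9 j = (-124 : ℤ) := by decide
theorem hdet10 : (Asub 10 (by norm_num)).det = (220 : ℤ) := by
  rw [hstep9]
  rw [det_step (Asub 9 (by norm_num)) M9 _ _ (by norm_num) hM9 hdet9 xv9 yv9 hs9]
  norm_num

theorem hM10 : M10 * Asub 10 (by norm_num) = (220 : ℤ) • 1 := by decide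
theorem hstep10 : Asub 11 (by norm_num) = border (Asub 10 (by norm_num)) xv10 yv10 1 := by decide
theorem hs10 : ∑ i, ∑ j, xv10 i * M10 i j * yv10 j = (-384 : ℤ) := by decide
theorem hdet11 : (Asub 11 (by norm_num)).det = (604 : ℤ) := by
  rw [hstep10]
  rw [det_step (Asub 10 (by norm_num)) M10 _ _ (by norm_num) hM10 hdet10 xv10 yv10 hs10]
  norm_num

theorem hM11 : M11 * Asub 11 (by norm_num) = (604 : ℤ) • 1 := by decide
theorem hstep11 : Asub 12 (by norm_num) = border (Asub 11 (by norm_num)) xv11 yv11 1 := by decide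
theorem hs11 : ∑ i, ∑ j, xv11 i * M11 i j * yv11 j = (-1004 : ℤ) := by decide
theorem hdet12 : (Asub 12 (by norm_num)).det = (1608 : ℤ) := by
  rw [hstep11]
  rw [det_step (Asub 11 (by norm_num)) M11 _ _ (by norm_num) hM11 hdet11 xv11 yv11 hs11]
  norm_num

def rowsM : List (List ℤ) := [
[198, 120, -126, -18, 186, -94, -76, -78, -26, 100, -116],
[-146, 122, 38, 178, -128, -10, 114, -34, -112, 152, -128],
[78, -90, 170, -62, -64, 146, -94, 134, -56, 76, -64],
[162, -94, -158, 150, -40, -22, 130, 46, 116, -28, -40],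
[20, -116, 152, 108, 92, -40, -148, -136, 156, 4, 92],
[-36, 88, -32, 168, 76, 72, -96, 124, -160, -128, 76],
[-64, -112, -124, -104, 68, 128, 232, -48, -16, 108, 68],
[-118, 20, 130, -154, 182, -66, 88, 138, 46, -84, -120],
[22, 114, -14, -2, -80, 258, -42, -210, 232, -56, -80],
[-86, 76, -110, -102, -154, -130, -28, 162, 54, 164, 148],
[166, 64, 114, -70, -82, -30, 40, -102, -34, -148, 220]]

def rowdot : List ℤ → List Bool → ℤ
  | a :: r, b :: bs => (if b then a else 0) + rowdot r bs
  | _, _ => 0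

def totL (bs : List Bool) : ℤ := (rowsM.map (fun r => min 0 (rowdot r bs))).sum

def chk : Nat → List Bool → Bool
  | 0, bs => decide ((-1004 : ℤ) ≤ totL bs)
  | k+1, bs => chk k (bs ++ [false]) && chk k (bs ++ [true])

set_option maxRecDepth 40000 in
set_option maxHeartbeats 4000000 in
theorem chk_true : chk 11 [] = true := by decide

theorem tot_eq (b : Fin 11 → Bool) : totL (List.ofFn b)
    = ∑ i : Fin 11, min 0 (∑ j : Fin 11, M11 i j * (if b j then (1:ℤ) else 0)) := by
  simp [totL, rowsM, rowdot, List.ofFn_succ, Fin.sum_univ_succ, M11, mul_ite, mul_one, mul_zero,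
    Fin.isValue]

theorem chk_sound : ∀ (k : ℕ) (bs : List Bool), chk k bs = true →
    ∀ l : List Bool, l.length = k → (-1004 : ℤ) ≤ totL (bs ++ l) := by
  intro k
  induction k with
  | zero =>
    intro bs h l hl
    have hl0 : l = [] := List.length_eq_zero_iff.mp hl
    subst hl0
    rw [List.append_nil]
    exact of_decide_eq_true h
  | succ k ih =>
    intro bs h l hl
    cases l with
    | nil => simp at hl
    | cons a l' =>
      have hl' : l'.length = k := by simpa using hl
      have h2 : chk k (bs ++ [false]) = true ∧ chk k (bs ++ [true]) = true := by
        rw [chk] at h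
        exact Bool.and_eq_true_iff.mp h
      have hassoc : bs ++ a :: l' = (bs ++ [a]) ++ l' := by simp
      rw [hassoc]
      cases a
      · exact ih (bs ++ [false]) h2.1 l' hl'
      · exact ih (bs ++ [true]) h2.2 l' hl'

theorem key_bound (b : Fin 11 → Bool) :
    (-1004 : ℤ) ≤ ∑ i : Fin 11, min 0 (∑ j : Fin 11, M11 i j * (if b j then (1:ℤ) else 0)) := by
  have h := chk_sound 11 [] chk_true (List.ofFn b) (by simp)
  rw [List.nil_append] at h
  exact tot_eq b ▸ h

/-- The maximum of `det B(A_11, x, y, 1)` over `x, y ∈ {0, 1}^11` equals `1608`, and it is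
attained by the bordering of `A_11` that yields `A_12`. -/
theorem border_max_11 :
    IsGreatest {d : ℤ | ∃ x y : Fin 11 → ℤ,
        (∀ i, x i = 0 ∨ x i = 1) ∧ (∀ i, y i = 0 ∨ y i = 1) ∧
        d = (border (Asub 11 (by norm_num)) x y 1).det} 1608 ∧
    border (Asub 11 (by norm_num))
        (fun j => A15 ⟨11, by norm_num⟩ (Fin.castLE (by norm_num) j))
        (fun i => A15 (Fin.castLE (by norm_num) i) ⟨11, by norm_num⟩) 1
      = Asub 12 (by norm_num) ∧
    (Asub 12 (by norm_num)).det = 1608 := by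
  have hborder12 : border (Asub 11 (by norm_num))
      (fun j => A15 ⟨11, by norm_num⟩ (Fin.castLE (by norm_num) j))
      (fun i => A15 (Fin.castLE (by norm_num) i) ⟨11, by norm_num⟩) 1
      = Asub 12 (by norm_num) := by decide
  have hd12 : (Asub 12 (by norm_num)).det = 1608 := hdet12
  refine ⟨⟨?_, ?_⟩, hborder12, hd12⟩
  · -- membership
    refine ⟨(fun j => A15 ⟨11, by norm_num⟩ (Fin.castLE (by norm_num) j)),
      (fun i => A15 (Fin.castLE (by norm_num) i) ⟨11, by norm_num⟩), ?_, ?_, ?_⟩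
    · intro i; revert i; decide
    · intro i; revert i; decide
    · rw [hborder12, hd12]
  · -- upper bound
    rintro d ⟨x, y, hx, hy, rfl⟩
    have hident := det_border_eq (Asub 11 (by norm_num)) M11 604 hM11 x y 1
    rw [hdet11, mul_one] at hident
    have hdetB : (border (Asub 11 (by norm_num)) x y 1).det
        = 604 - ∑ i, ∑ j, x i * M11 i j * y j :=
      mul_left_cancel₀ (by norm_num : (604:ℤ) ≠ 0) hident
    rw [hdetB]
    have hS : (-1004 : ℤ) ≤ ∑ i, ∑ j, x i * M11 i j * y j := by
      have hex : ∀ j, ∃ c : Bool, y j = if c then (1:ℤ) else 0 := fun j =>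
        (hy j).elim (fun h => ⟨false, by simp [h]⟩) (fun h => ⟨true, by simp [h]⟩)
      choose b hyb using hex
      calc (-1004 : ℤ) ≤ ∑ i : Fin 11, min 0 (∑ j : Fin 11, M11 i j * (if b j then (1:ℤ) else 0)) :=
            key_bound b
        _ = ∑ i : Fin 11, min 0 (∑ j : Fin 11, M11 i j * y j) := by
            refine Finset.sum_congr rfl fun i _ => ?_
            have hin : (∑ j : Fin 11, M11 i j * (if b j then (1:ℤ) else 0))
                = ∑ j : Fin 11, M11 i j * y j :=
              Finset.sum_congr rfl fun j _ => by rw [← hyb j]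
            rw [hin]
        _ ≤ ∑ i, ∑ j, x i * M11 i j * y j := by
            refine Finset.sum_le_sum fun i _ => ?_
            have hrow : ∑ j, x i * M11 i j * y j = x i * ∑ j, M11 i j * y j := by
              rw [Finset.mul_sum]
              exact Finset.sum_congr rfl fun j _ => by ring
            rw [hrow]
            rcases hx i with h | h
            · rw [h, zero_mul]; exact min_le_left _ _
            · rw [h, one_mul]; exact min_le_right _ _
    linarith
end

section
/- The maximum of det B(A₁₂, x, y, 1) over all vectors x, y ∈ {0, 1}¹², where A₁₂ is the upper-left 12 × 12 submatrix of A₁₅, equals 4734, and this maximum is attained by the bordering that yields A₁₃ (the upper-left 13 × 13 submatrix of A₁₅). -/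
open Matrix

def Cm1 : Matrix (Fin 1) (Fin 1) ℤ :=
  !![1]

def Cm2 : Matrix (Fin 2) (Fin 2) ℤ :=
  !![1, 0;
    -1, 1]

def Cm3 : Matrix (Fin 3) (Fin 3) ℤ :=
  !![1, 1, -1;
    -1, 1, 1;
    1, -1, 1]

def Cm4 : Matrix (Fin 4) (Fin 4) ℤ :=
  !![1, 2, -1, -1;
    -1, 1, 1, 1;
    1, -1, 2, -1;
    1, -1, -1, 2]

def Cm5 : Matrix (Fin 5) (Fin 5) ℤ :=
  !![1, 2, -1, -1, 2;
    -1, 3, 1, 1, -2;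
    2, -1, 3, -2, -1;
    2, -1, -2, 3, -1;
    -1, -2, 1, 1, 3]

def Cm6 : Matrix (Fin 6) (Fin 6) ℤ :=
  !![3, 3, 0, -3, 3, -3;
    -1, 5, 3, 1, -4, -2;
    2, -1, 3, -2, -1, 4;
    4, -2, -3, 5, -2, -1;
    -1, -4, 3, 1, 5, -2;
    -2, 1, -3, 2, 1, 5]

def Cm7 : Matrix (Fin 7) (Fin 7) ℤ :=
  !![6, 6, 0, -6, 6, -6, 0;
    -4, 8, 6, -2, -4, -2, 6;
    5, -1, 6, -2, -4, 7, -3;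
    7, -5, -6, 8, -2, -1, 3;
    -1, -7, 6, 4, 8, -5, -3;
    -2, 4, -6, 8, -2, 8, -6;
    -3, -3, 0, -6, 6, 3, 9]

def Cm8 : Matrix (Fin 8) (Fin 8) ℤ :=
  !![20, 12, -4, -4, 8, -4, -4, -12;
    0, 16, 8, 8, -16, 8, 8, -16;
    10, -2, 14, -6, -8, 14, -6, 2;
    10, -10, -10, 10, 0, -10, 10, 10;
    0, -16, 12, 12, 16, -8, -8, -4;
    -10, 10, -10, 10, 0, 10, -10, 10;
    0, -8, -4, -4, 8, 16, 16, -12;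
    -10, 2, 6, -14, 8, -14, 6, 18]

def Cm9 : Matrix (Fin 9) (Fin 9) ℤ :=
  !![48, 24, -8, -8, 24, -16, -8, -24, -8;
    0, 24, 24, 24, -24, 0, 24, -24, -24;
    24, -12, 36, -12, -12, 24, -12, 12, -12;
    24, -12, -28, 20, -12, -8, 20, 12, 20;
    0, -24, 24, 24, 24, 0, -24, -24, 24;
    -24, 12, -20, 28, 12, 8, -20, 36, -20;
    0, -24, -8, -8, 24, 32, 40, -24, -8;
    -24, 12, 12, -36, 12, -24, 12, 36, 12;
    0, 24, -8, -8, -24, 32, -8, -24, 40]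

def Cm10 : Matrix (Fin 10) (Fin 10) ℤ :=
  !![104, 56, -24, -20, 52, -40, -20, -48, -16, 8;
    -18, 58, 38, 50, -64, -10, 50, -34, -48, 24;
    46, -26, 74, -30, -32, 50, -30, 38, -24, 12;
    70, -30, -50, 50, -20, -10, 50, 10, 40, -20;
    -18, -52, 38, 50, 46, -10, -60, -34, 62, 24;
    -34, 24, -26, 70, 38, 30, -40, 58, -54, -28;
    -42, -48, -58, -30, 34, 50, 80, -6, -2, 56;
    -10, 20, 70, -70, 50, -30, 40, 30, 10, -60;
    30, 50, 10, -10, -40, 90, -10, -90, 80, -40;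
    -72, 12, -68, -20, -36, -40, -20, 84, 28, 96]

def Cm11 : Matrix (Fin 11) (Fin 11) ℤ :=
  !![198, 120, -126, -18, 186, -94, -76, -78, -26, 100, -116;
    -146, 122, 38, 178, -128, -10, 114, -34, -112, 152, -128;
    78, -90, 170, -62, -64, 146, -94, 134, -56, 76, -64;
    162, -94, -158, 150, -40, -22, 130, 46, 116, -28, -40;
    20, -116, 152, 108, 92, -40, -148, -136, 156, 4, 92;
    -36, 88, -32, 168, 76, 72, -96, 124, -160, -128, 76;
    -64, -112, -124, -104, 68, 128, 232, -48, -16, 108, 68;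
    -118, 20, 130, -154, 182, -66, 88, 138, 46, -84, -120;
    22, 114, -14, -2, -80, 258, -42, -210, 232, -56, -80;
    -86, 76, -110, -102, -154, -130, -28, 162, 54, 164, 148;
    166, 64, 114, -70, -82, -30, 40, -102, -34, -148, 220]

def Cm12 : Matrix (Fin 12) (Fin 12) ℤ :=
  !![436, 240, -132, -156, 492, -388, -392, -36, -172, 120, -152, 320;
    -424, 294, 180, 432, -342, -80, 230, -24, -338, 348, -280, 124;
    276, -180, 300, -84, -168, 492, -108, 228, -72, 312, -288, -240;
    388, -288, -324, 348, -108, -124, 256, 204, 260, -144, -32, 152;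
    84, -282, 336, 324, 246, -60, -330, -420, 450, 60, 192, -108;
    -48, 276, -192, 504, 204, 264, -156, 240, -372, -264, 120, -168;
    -200, -324, -264, -312, 180, 296, 556, -72, -76, 240, 232, 104;
    -272, 90, 252, -360, 486, -112, 322, 288, 170, -156, -392, -148;
    -28, 228, 156, -108, -216, 556, -292, -396, 520, -288, -64, 304;
    -172, 252, -420, -204, -408, -260, 44, 324, 208, 528, 296, -200;
    508, 228, 156, -108, -216, 20, 244, -396, -16, -288, 472, -232;
    -172, -150, 384, -204, -6, -260, -358, 324, -194, -276, 296, 604]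

theorem border_det {n : ℕ} (A C : Matrix (Fin n) (Fin n) ℤ) (d : ℤ) (hd : d ≠ 0)
    (hAC : A * C = d • 1) (hCA : C * A = d • 1) (hdet : A.det = d) (x y : Fin n → ℤ) :
    (border A x y 1).det = d - x ⬝ᵥ C *ᵥ y := by
  classical
  have hE : fromBlocks A (replicateCol (Fin 1) y) (replicateRow (Fin 1) x) (1 : Matrix (Fin 1) (Fin 1) ℤ)
      = (border A x y 1).submatrix finSumFinEquiv finSumFinEquiv := by
    ext i j
    cases i with
    | inl i =>
      cases j with
      | inl j =>
        simp [border, finSumFinEquiv_apply_left, Fin.is_lt]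
      | inr j =>
        simp [border, finSumFinEquiv_apply_left, finSumFinEquiv_apply_right, Fin.is_lt]
    | inr i =>
      cases j with
      | inl j =>
        simp [border, finSumFinEquiv_apply_left, finSumFinEquiv_apply_right, Fin.is_lt]
      | inr j =>
        simp [border, finSumFinEquiv_apply_right, Matrix.one_apply, Subsingleton.elim i j]
  have h1 : (border A x y 1).det
      = (fromBlocks A (replicateCol (Fin 1) y) (replicateRow (Fin 1) x) (1 : Matrix (Fin 1) (Fin 1) ℤ)).det := by
    rw [hE, det_submatrix_equiv_self]
  set Aq : Matrix (Fin n) (Fin n) ℚ := A.map ((↑) : ℤ → ℚ) with hAqdef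
  set Cq : Matrix (Fin n) (Fin n) ℚ := C.map ((↑) : ℤ → ℚ) with hCqdef
  have hdq : (d : ℚ) ≠ 0 := Int.cast_ne_zero.mpr hd
  have hACq : Aq * Cq = (d : ℚ) • 1 := by
    ext i j
    have := congrFun (congrFun hAC i) j
    simp only [Matrix.mul_apply, Matrix.smul_apply, Matrix.one_apply, smul_eq_mul] at this ⊢
    simp only [hAqdef, hCqdef, Matrix.map_apply]
    exact_mod_cast congrArg (fun t : ℤ => (t : ℚ)) this
  have hCAq : Cq * Aq = (d : ℚ) • 1 := by
    ext i j
    have := congrFun (congrFun hCA i) j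
    simp only [Matrix.mul_apply, Matrix.smul_apply, Matrix.one_apply, smul_eq_mul] at this ⊢
    simp only [hAqdef, hCqdef, Matrix.map_apply]
    exact_mod_cast congrArg (fun t : ℤ => (t : ℚ)) this
  letI instInv : Invertible Aq :=
    ⟨(d : ℚ)⁻¹ • Cq, by rw [Matrix.smul_mul, hCAq, smul_smul, inv_mul_cancel₀ hdq, one_smul],
      by rw [Matrix.mul_smul, hACq, smul_smul, inv_mul_cancel₀ hdq, one_smul]⟩
  have hmapdet : ∀ (M : Matrix (Fin n ⊕ Fin 1) (Fin n ⊕ Fin 1) ℤ),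
      ((M.det : ℚ)) = (M.map ((↑) : ℤ → ℚ)).det := by
    intro M
    have h := RingHom.map_det (Int.castRingHom ℚ) M
    rwa [RingHom.mapMatrix_apply, Int.coe_castRingHom] at h
  have hdetq : Aq.det = (d : ℚ) := by
    have h := RingHom.map_det (Int.castRingHom ℚ) A
    rw [RingHom.mapMatrix_apply, Int.coe_castRingHom] at h
    rw [hAqdef, ← h, hdet]
  have hcast : ((fromBlocks A (replicateCol (Fin 1) y) (replicateRow (Fin 1) x)
      (1 : Matrix (Fin 1) (Fin 1) ℤ)).det : ℚ)
      = (fromBlocks Aq (replicateCol (Fin 1) (fun i => (y i : ℚ))) (replicateRow (Fin 1) (fun j => (x j : ℚ)))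
        (1 : Matrix (Fin 1) (Fin 1) ℚ)).det := by
    rw [hmapdet]
    congr 1
    rw [Matrix.fromBlocks_map]
    ext i j
    cases i <;> cases j <;> simp [Matrix.map_apply, Matrix.one_apply, hAqdef]
  rw [h1]
  have key : (fromBlocks Aq (replicateCol (Fin 1) (fun i => (y i : ℚ))) (replicateRow (Fin 1) (fun j => (x j : ℚ)))
      (1 : Matrix (Fin 1) (Fin 1) ℚ)).det = (d : ℚ) - ((x ⬝ᵥ C *ᵥ y : ℤ) : ℚ) := by
    rw [det_fromBlocks₁₁, hdetq]
    have hinv : ⅟Aq = (d : ℚ)⁻¹ • Cq := rfl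
    rw [hinv, det_unique]
    simp only [Matrix.sub_apply, Matrix.one_apply_eq, Matrix.mul_apply, Matrix.replicateRow_apply,
      Matrix.replicateCol_apply, Matrix.smul_apply, smul_eq_mul, dotProduct, mulVec,
      Finset.univ_unique, Finset.sum_singleton, hCqdef, Matrix.map_apply]
    push_cast
    rw [mul_sub, mul_one, Finset.mul_sum]
    congr 1
    calc ∑ j, (d:ℚ) * ((∑ i, (x i : ℚ) * ((d:ℚ)⁻¹ * (C i j : ℚ))) * (y j : ℚ))
        = ∑ j, ∑ i, (x i : ℚ) * ((C i j : ℚ) * (y j : ℚ)) := by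
          refine Finset.sum_congr rfl fun j _ => ?_
          rw [Finset.sum_mul, Finset.mul_sum]
          refine Finset.sum_congr rfl fun i _ => ?_
          field_simp
      _ = ∑ i, ∑ j, (x i : ℚ) * ((C i j : ℚ) * (y j : ℚ)) := Finset.sum_comm
      _ = ∑ i, (x i : ℚ) * ∑ j, (C i j : ℚ) * (y j : ℚ) :=
          Finset.sum_congr rfl fun i _ => (Finset.mul_sum _ _ _).symm
  have hfin : (((fromBlocks A (replicateCol (Fin 1) y) (replicateRow (Fin 1) x)
      (1 : Matrix (Fin 1) (Fin 1) ℤ)).det : ℚ)) = ((d - x ⬝ᵥ C *ᵥ y : ℤ) : ℚ) := by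
    rw [hcast, key]
    push_cast
    ring
  exact_mod_cast hfin

def dotb : List ℤ → List Bool → ℤ
  | a :: as, b :: bs => (if b then a else 0) + dotb as bs
  | _, _ => 0

def score : List (List ℤ) → List Bool → ℤ
  | r :: rs, b => min 0 (dotb r b) + score rs b
  | [], _ => 0

def Crows : List (List ℤ) :=
  [[436, 240, -132, -156, 492, -388, -392, -36, -172, 120, -152, 320],
   [-424, 294, 180, 432, -342, -80, 230, -24, -338, 348, -280, 124],
   [276, -180, 300, -84, -168, 492, -108, 228, -72, 312, -288, -240],
   [388, -288, -324, 348, -108, -124, 256, 204, 260, -144, -32, 152],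
   [84, -282, 336, 324, 246, -60, -330, -420, 450, 60, 192, -108],
   [-48, 276, -192, 504, 204, 264, -156, 240, -372, -264, 120, -168],
   [-200, -324, -264, -312, 180, 296, 556, -72, -76, 240, 232, 104],
   [-272, 90, 252, -360, 486, -112, 322, 288, 170, -156, -392, -148],
   [-28, 228, 156, -108, -216, 556, -292, -396, 520, -288, -64, 304],
   [-172, 252, -420, -204, -408, -260, 44, 324, 208, 528, 296, -200],
   [508, 228, 156, -108, -216, 20, 244, -396, -16, -288, 472, -232],
   [-172, -150, 384, -204, -6, -260, -358, 324, -194, -276, 296, 604]]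

set_option maxHeartbeats 10000000 in
set_option maxRecDepth 10000 in
theorem keybound : ∀ b0 b1 b2 b3 b4 b5 b6 b7 b8 b9 b10 b11 : Bool,
    (-3126 : ℤ) ≤ score Crows [b0,b1,b2,b3,b4,b5,b6,b7,b8,b9,b10,b11] := by decide

set_option maxHeartbeats 2000000 in
theorem scoreglue (b0 b1 b2 b3 b4 b5 b6 b7 b8 b9 b10 b11 : Bool) :
    ∑ i, min 0 ((Cm12 *ᵥ (fun j => if ![b0,b1,b2,b3,b4,b5,b6,b7,b8,b9,b10,b11] j
        then (1:ℤ) else 0)) i)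
      = score Crows [b0,b1,b2,b3,b4,b5,b6,b7,b8,b9,b10,b11] := by
  simp only [score, dotb, Crows, Cm12, mulVec, dotProduct, Fin.sum_univ_succ,
    Fin.sum_univ_zero, Matrix.cons_val_zero, Matrix.cons_val_succ, Matrix.of_apply,
    mul_ite, mul_one, mul_zero, add_zero]
  rfl

lemma bin (t : ℤ) (h : t = 0 ∨ t = 1) : t = if decide (t = 1) = true then 1 else 0 := by
  rcases h with h | h <;> simp [h]

set_option maxHeartbeats 4000000 in
set_option maxRecDepth 8000 in
/-- The maximum of `det B(A_12, x, y, 1)` over `x, y ∈ {0, 1}^12` equals `4734`, and it is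
attained by the bordering of `A_12` that yields `A_13`. -/
theorem border_max_12 :
    IsGreatest {d : ℤ | ∃ x y : Fin 12 → ℤ,
        (∀ i, x i = 0 ∨ x i = 1) ∧ (∀ i, y i = 0 ∨ y i = 1) ∧
        d = (border (Asub 12 (by norm_num)) x y 1).det} 4734 ∧
    border (Asub 12 (by norm_num))
        (fun j => A15 ⟨12, by norm_num⟩ (Fin.castLE (by norm_num) j))
        (fun i => A15 (Fin.castLE (by norm_num) i) ⟨12, by norm_num⟩) 1
      = Asub 13 (by norm_num) ∧
    (Asub 13 (by norm_num)).det = 4734 := by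
  have e1 : (Asub 1 (by norm_num)).det = 1 := by decide
  have e2 : (Asub 2 (by norm_num)).det = 1 := by
    rw [show Asub 2 (by norm_num) = border (Asub 1 (by norm_num))
        (fun j => A15 ⟨1, by norm_num⟩ (Fin.castLE (by norm_num) j))
        (fun i => A15 (Fin.castLE (by norm_num) i) ⟨1, by norm_num⟩) 1 from by decide,
      border_det (Asub 1 (by norm_num)) Cm1 1 (by decide) (by decide) (by decide) e1]
    decide
  have e3 : (Asub 3 (by norm_num)).det = 2 := by
    rw [show Asub 3 (by norm_num) = border (Asub 2 (by norm_num))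
        (fun j => A15 ⟨2, by norm_num⟩ (Fin.castLE (by norm_num) j))
        (fun i => A15 (Fin.castLE (by norm_num) i) ⟨2, by norm_num⟩) 1 from by decide,
      border_det (Asub 2 (by norm_num)) Cm2 1 (by decide) (by decide) (by decide) e2]
    decide
  have e4 : (Asub 4 (by norm_num)).det = 3 := by
    rw [show Asub 4 (by norm_num) = border (Asub 3 (by norm_num))
        (fun j => A15 ⟨3, by norm_num⟩ (Fin.castLE (by norm_num) j))
        (fun i => A15 (Fin.castLE (by norm_num) i) ⟨3, by norm_num⟩) 1 from by decide,
      border_det (Asub 3 (by norm_num)) Cm3 2 (by decide) (by decide) (by decide) e3]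
    decide
  have e5 : (Asub 5 (by norm_num)).det = 5 := by
    rw [show Asub 5 (by norm_num) = border (Asub 4 (by norm_num))
        (fun j => A15 ⟨4, by norm_num⟩ (Fin.castLE (by norm_num) j))
        (fun i => A15 (Fin.castLE (by norm_num) i) ⟨4, by norm_num⟩) 1 from by decide,
      border_det (Asub 4 (by norm_num)) Cm4 3 (by decide) (by decide) (by decide) e4]
    decide
  have e6 : (Asub 6 (by norm_num)).det = 9 := by
    rw [show Asub 6 (by norm_num) = border (Asub 5 (by norm_num))
        (fun j => A15 ⟨5, by norm_num⟩ (Fin.castLE (by norm_num) j))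
        (fun i => A15 (Fin.castLE (by norm_num) i) ⟨5, by norm_num⟩) 1 from by decide,
      border_det (Asub 5 (by norm_num)) Cm5 5 (by decide) (by decide) (by decide) e5]
    decide
  have e7 : (Asub 7 (by norm_num)).det = 18 := by
    rw [show Asub 7 (by norm_num) = border (Asub 6 (by norm_num))
        (fun j => A15 ⟨6, by norm_num⟩ (Fin.castLE (by norm_num) j))
        (fun i => A15 (Fin.castLE (by norm_num) i) ⟨6, by norm_num⟩) 1 from by decide,
      border_det (Asub 6 (by norm_num)) Cm6 9 (by decide) (by decide) (by decide) e6]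
    decide
  have e8 : (Asub 8 (by norm_num)).det = 40 := by
    rw [show Asub 8 (by norm_num) = border (Asub 7 (by norm_num))
        (fun j => A15 ⟨7, by norm_num⟩ (Fin.castLE (by norm_num) j))
        (fun i => A15 (Fin.castLE (by norm_num) i) ⟨7, by norm_num⟩) 1 from by decide,
      border_det (Asub 7 (by norm_num)) Cm7 18 (by decide) (by decide) (by decide) e7]
    decide
  have e9 : (Asub 9 (by norm_num)).det = 96 := by
    rw [show Asub 9 (by norm_num) = border (Asub 8 (by norm_num))
        (fun j => A15 ⟨8, by norm_num⟩ (Fin.castLE (by norm_num) j))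
        (fun i => A15 (Fin.castLE (by norm_num) i) ⟨8, by norm_num⟩) 1 from by decide,
      border_det (Asub 8 (by norm_num)) Cm8 40 (by decide) (by decide) (by decide) e8]
    decide
  have e10 : (Asub 10 (by norm_num)).det = 220 := by
    rw [show Asub 10 (by norm_num) = border (Asub 9 (by norm_num))
        (fun j => A15 ⟨9, by norm_num⟩ (Fin.castLE (by norm_num) j))
        (fun i => A15 (Fin.castLE (by norm_num) i) ⟨9, by norm_num⟩) 1 from by decide,
      border_det (Asub 9 (by norm_num)) Cm9 96 (by decide) (by decide) (by decide) e9]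
    decide
  have e11 : (Asub 11 (by norm_num)).det = 604 := by
    rw [show Asub 11 (by norm_num) = border (Asub 10 (by norm_num))
        (fun j => A15 ⟨10, by norm_num⟩ (Fin.castLE (by norm_num) j))
        (fun i => A15 (Fin.castLE (by norm_num) i) ⟨10, by norm_num⟩) 1 from by decide,
      border_det (Asub 10 (by norm_num)) Cm10 220 (by decide) (by decide) (by decide) e10]
    decide
  have e12 : (Asub 12 (by norm_num)).det = 1608 := by
    rw [show Asub 12 (by norm_num) = border (Asub 11 (by norm_num))
        (fun j => A15 ⟨11, by norm_num⟩ (Fin.castLE (by norm_num) j))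
        (fun i => A15 (Fin.castLE (by norm_num) i) ⟨11, by norm_num⟩) 1 from by decide,
      border_det (Asub 11 (by norm_num)) Cm11 604 (by decide) (by decide) (by decide) e11]
    decide
  have e13 : (Asub 13 (by norm_num)).det = 4734 := by
    rw [show Asub 13 (by norm_num) = border (Asub 12 (by norm_num))
        (fun j => A15 ⟨12, by norm_num⟩ (Fin.castLE (by norm_num) j))
        (fun i => A15 (Fin.castLE (by norm_num) i) ⟨12, by norm_num⟩) 1 from by decide,
      border_det (Asub 12 (by norm_num)) Cm12 1608 (by decide) (by decide) (by decide) e12]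
    decide
  have hb : border (Asub 12 (by norm_num)) (fun j => A15 ⟨12, by norm_num⟩ (Fin.castLE (by norm_num) j)) (fun i => A15 (Fin.castLE (by norm_num) i) ⟨12, by norm_num⟩) 1 = Asub 13 (by norm_num) := by
    decide
  refine ⟨⟨⟨(fun j => A15 ⟨12, by norm_num⟩ (Fin.castLE (by norm_num) j)), (fun i => A15 (Fin.castLE (by norm_num) i) ⟨12, by norm_num⟩), by decide, by decide, ?_⟩, ?_⟩, hb, e13⟩
  · rw [hb, e13]
  · rintro d ⟨x, y, hx, hy, rfl⟩
    rw [border_det (Asub 12 (by norm_num)) Cm12 1608 (by decide) (by decide) (by decide) e12 x y]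
    have hy' : y = fun j => if ![decide (y 0 = 1), decide (y 1 = 1), decide (y 2 = 1),
        decide (y 3 = 1), decide (y 4 = 1), decide (y 5 = 1), decide (y 6 = 1),
        decide (y 7 = 1), decide (y 8 = 1), decide (y 9 = 1), decide (y 10 = 1),
        decide (y 11 = 1)] j then (1:ℤ) else 0 := by
      funext j
      fin_cases j <;> exact bin _ (hy _)
    have hge : (-3126 : ℤ) ≤ x ⬝ᵥ Cm12 *ᵥ y := by
      calc (-3126 : ℤ) ≤ score Crows [decide (y 0 = 1), decide (y 1 = 1), decide (y 2 = 1),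
            decide (y 3 = 1), decide (y 4 = 1), decide (y 5 = 1), decide (y 6 = 1),
            decide (y 7 = 1), decide (y 8 = 1), decide (y 9 = 1), decide (y 10 = 1),
            decide (y 11 = 1)] := keybound _ _ _ _ _ _ _ _ _ _ _ _
        _ = ∑ i, min 0 ((Cm12 *ᵥ y) i) := by rw [← scoreglue, ← hy']
        _ ≤ ∑ i, x i * ((Cm12 *ᵥ y) i) := by
            refine Finset.sum_le_sum fun i _ => ?_
            rcases hx i with h | h
            · rw [h, zero_mul]
              exact min_le_left _ _
            · rw [h, one_mul]
              exact min_le_right _ _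
        _ = x ⬝ᵥ Cm12 *ᵥ y := rfl
    linarith
end
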